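/- For any exponents β₁, ..., βₙ > -1 and any t > 0, the integral over the simplex Tₙ(t) = {(t₁,...,tₙ) ∈ (0,t)ⁿ : t₁ < ... < tₙ} of the product ∏_{j=1}^n (t_{j+1} - t_j)^{β_j} (with t_{n+1} = t) equals (∏_{j=1}^n Γ(β_j + 1)) / Γ(∑_{j=1}^n β_j + n + 1) · t^{∑_{j=1}^n β_j + n}. -/

import Mathlib

open MeasureTheory Real Set
open scoped ENNReal

section helpers

lemma beta_intervalIntegrable {a b : ℝ} (ha : -1 < a) (hb : -1 < b) {c : ℝ} (hc : 0 < c) :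
    IntervalIntegrable (fun x => x ^ a * (c - x) ^ b) volume 0 c := by
  have h1 : IntervalIntegrable (fun x => x ^ a * (c - x) ^ b) volume 0 (c / 2) := by
    apply (intervalIntegral.intervalIntegrable_rpow' ha).mul_continuousOn
    apply ContinuousOn.rpow_const (by fun_prop)
    intro x hx
    rw [Set.uIcc_of_le (by linarith)] at hx
    left
    have := hx.2
    intro h
    nlinarith [hx.1, hx.2]
  have h2 : IntervalIntegrable (fun x => x ^ a * (c - x) ^ b) volume (c / 2) c := by
    have hI : IntervalIntegrable (fun x => (c - x) ^ b) volume (c / 2) c := by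
      have := ((intervalIntegral.intervalIntegrable_rpow' (a := 0) (b := c / 2) hb).comp_sub_left c).symm
      simpa [sub_half] using this
    apply hI.continuousOn_mul
    apply ContinuousOn.rpow_const (by fun_prop)
    intro x hx
    rw [Set.uIcc_of_le (by linarith)] at hx
    left
    nlinarith [hx.1]
  exact h1.trans h2

lemma beta_integral_eval {a b : ℝ} (ha : -1 < a) (hb : -1 < b) {c : ℝ} (hc : 0 < c) :
    ∫ x in (0:ℝ)..c, x ^ a * (c - x) ^ b
      = Real.Gamma (a + 1) * Real.Gamma (b + 1) / Real.Gamma (a + b + 2) * c ^ (a + b + 1) := by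
  have ha' : (0:ℝ) < a + 1 := by linarith
  have hb' : (0:ℝ) < b + 1 := by linarith
  have hsc := Complex.betaIntegral_scaled (a + 1) (b + 1) hc
  have hG := Complex.Gamma_mul_Gamma_eq_betaIntegral
    (s := (a:ℂ) + 1) (t := (b:ℂ) + 1) (by simpa using ha') (by simpa using hb')
  have hGne : Complex.Gamma ((a:ℂ) + 1 + ((b:ℂ) + 1)) ≠ 0 := by
    rw [show (a:ℂ) + 1 + ((b:ℂ) + 1) = ((a + b + 2 : ℝ) : ℂ) by push_cast; ring,
      Complex.Gamma_ofReal]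
    exact_mod_cast (Real.Gamma_pos_of_pos (by linarith)).ne'
  have hbeta : Complex.betaIntegral ((a:ℂ) + 1) ((b:ℂ) + 1)
      = Complex.Gamma ((a:ℂ) + 1) * Complex.Gamma ((b:ℂ) + 1)
        / Complex.Gamma ((a:ℂ) + 1 + ((b:ℂ) + 1)) := by
    rw [hG, mul_div_cancel_left₀ _ hGne]
  have key : (∫ x in (0:ℝ)..c, ((x:ℂ)) ^ ((a:ℂ) + 1 - 1) * ((c:ℂ) - x) ^ ((b:ℂ) + 1 - 1))
      = ((Real.Gamma (a+1) * Real.Gamma (b+1) / Real.Gamma (a+b+2) * c ^ (a+b+1) : ℝ) : ℂ) := by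
    rw [hsc, hbeta]
    rw [show (a:ℂ) + 1 + ((b:ℂ) + 1) - 1 = ((a + b + 1 : ℝ) : ℂ) by push_cast; ring,
      show (a:ℂ) + 1 + ((b:ℂ) + 1) = ((a + b + 2 : ℝ) : ℂ) by push_cast; ring,
      ← Complex.ofReal_cpow hc.le, ← Complex.ofReal_one]
    rw [← Complex.ofReal_add, ← Complex.ofReal_add, Complex.Gamma_ofReal,
      Complex.Gamma_ofReal, Complex.Gamma_ofReal]
    push_cast
    ring
  have heq : (∫ x in (0:ℝ)..c, ((x:ℂ)) ^ ((a:ℂ) + 1 - 1) * ((c:ℂ) - x) ^ ((b:ℂ) + 1 - 1))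
      = ((∫ x in (0:ℝ)..c, x ^ a * (c - x) ^ b : ℝ) : ℂ) := by
    rw [← intervalIntegral.integral_ofReal]
    apply intervalIntegral.integral_congr
    intro x hx
    rw [Set.uIcc_of_le hc.le] at hx
    dsimp only
    rw [show (a:ℂ) + 1 - 1 = ((a:ℝ):ℂ) by push_cast; ring,
      show (b:ℂ) + 1 - 1 = ((b:ℝ):ℂ) by push_cast; ring,
      ← Complex.ofReal_cpow hx.1, ← Complex.ofReal_sub, ← Complex.ofReal_cpow (by linarith [hx.2])]
    push_cast
    ring
  rw [heq] at key
  exact_mod_cast key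

lemma beta_lintegral {a b : ℝ} (ha : -1 < a) (hb : -1 < b) {c : ℝ} (hc : 0 < c) :
    ∫⁻ x in Set.Ioo 0 c, ENNReal.ofReal (x ^ a * (c - x) ^ b)
      = ENNReal.ofReal
          (Real.Gamma (a + 1) * Real.Gamma (b + 1) / Real.Gamma (a + b + 2) * c ^ (a + b + 1)) := by
  have hInt : IntegrableOn (fun x => x ^ a * (c - x) ^ b) (Set.Ioo 0 c) := by
    apply IntegrableOn.mono_set ((intervalIntegrable_iff_integrableOn_Ioc_of_le hc.le).mp
      (beta_intervalIntegrable ha hb hc)) Set.Ioo_subset_Ioc_self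
  rw [← ofReal_integral_eq_lintegral_ofReal hInt]
  · rw [show ∫ x in Set.Ioo 0 c, x ^ a * (c - x) ^ b
        = ∫ x in (0:ℝ)..c, x ^ a * (c - x) ^ b by
      rw [intervalIntegral.integral_of_le hc.le, MeasureTheory.integral_Ioc_eq_integral_Ioo]]
    rw [beta_integral_eval ha hb hc]
  · filter_upwards [ae_restrict_mem measurableSet_Ioo] with x hx
    exact mul_nonneg (Real.rpow_nonneg hx.1.le _) (Real.rpow_nonneg (by linarith [hx.2]) _)


/-- abbreviation for the open simplex -/
def simplexSet (n : ℕ) (t : ℝ) : Set (Fin n → ℝ) :=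
  {s : Fin n → ℝ | (∀ j, 0 < s j ∧ s j < t) ∧ StrictMono s}

lemma measurableSet_simplexSet (n : ℕ) (t : ℝ) : MeasurableSet (simplexSet n t) := by
  have h1 : MeasurableSet {s : Fin n → ℝ | ∀ j, 0 < s j ∧ s j < t} := by
    rw [Set.setOf_forall]
    exact MeasurableSet.iInter fun j =>
      ((measurableSet_lt measurable_const (measurable_pi_apply j)).inter
        (measurableSet_lt (measurable_pi_apply j) measurable_const))
  have h2 : MeasurableSet {s : Fin n → ℝ | StrictMono s} := by
    have : {s : Fin n → ℝ | StrictMono s}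
        = ⋂ (p : Fin n × Fin n) (_ : p.1 < p.2), {s | s p.1 < s p.2} := by
      ext s
      simp only [Set.mem_setOf_eq, Set.mem_iInter]
      exact ⟨fun h p hp => h hp, fun h i j hij => h (i, j) hij⟩
    rw [this]
    exact MeasurableSet.iInter fun p => MeasurableSet.iInter fun _ =>
      measurableSet_lt (measurable_pi_apply _) (measurable_pi_apply _)
  exact h1.inter h2

lemma measurable_simplexIntegrand (n : ℕ) (α : ℝ) (β : Fin n → ℝ) (t : ℝ) :
    Measurable (fun s : Fin n → ℝ =>
      (if h : 0 < n then s ⟨0, h⟩ else t) ^ α *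
        ∏ j : Fin n,
          ((if h : (j : ℕ) + 1 < n then s ⟨(j : ℕ) + 1, h⟩ else t) - s j) ^ (β j)) := by
  apply Measurable.mul
  · split_ifs with h
    · fun_prop
    · exact measurable_const
  · apply Finset.measurable_prod
    intro j _
    split_ifs with h <;> fun_prop

lemma simplexSet_factor_pos {n : ℕ} {t : ℝ} (ht : 0 < t) {s : Fin n → ℝ}
    (hs : s ∈ simplexSet n t) (j : Fin n) :
    0 < (if h : (j : ℕ) + 1 < n then s ⟨(j : ℕ) + 1, h⟩ else t) - s j := by
  obtain ⟨hbd, hmono⟩ := hs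
  split_ifs with h
  · have : j < (⟨(j : ℕ) + 1, h⟩ : Fin n) := by
      simp [Fin.lt_def]
    linarith [hmono this]
  · linarith [(hbd j).2]

lemma sum_add_card_nonneg {n : ℕ} {β : Fin n → ℝ} (hβ : ∀ j, -1 < β j) :
    0 ≤ (∑ j : Fin n, β j) + n := by
  have : (∑ j : Fin n, β j) + n = ∑ j : Fin n, (β j + 1) := by
    rw [Finset.sum_add_distrib]
    simp
  rw [this]
  exact Finset.sum_nonneg fun j _ => by linarith [hβ j]

lemma mem_simplexSet_cons {n : ℕ} {t : ℝ} (ht : 0 < t) (x : ℝ) (y : Fin n → ℝ) :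
    Fin.cons x y ∈ simplexSet (n + 1) t
      ↔ y ∈ simplexSet n t ∧ x ∈ Set.Ioo 0 (if h : 0 < n then y ⟨0, h⟩ else t) := by
  constructor
  · rintro ⟨hbd, hmono⟩
    have hy : StrictMono y := by
      intro i j hij
      have := hmono (show Fin.succ i < Fin.succ j from Fin.succ_lt_succ_iff.mpr hij)
      simpa using this
    have hx0 : 0 < x := by simpa using (hbd 0).1
    refine ⟨⟨fun j => by simpa using hbd j.succ, hy⟩, hx0, ?_⟩
    split_ifs with h
    · have := hmono (show (0 : Fin (n + 1)) < Fin.succ ⟨0, h⟩ from Fin.succ_pos _)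
      simpa only [Fin.cons_zero, Fin.cons_succ] using this
    · simpa using (hbd 0).2
  · rintro ⟨⟨hbd, hmono⟩, hx0, hxlt⟩
    have hxt : x < t := by
      split_ifs at hxlt with h
      · exact lt_trans hxlt (hbd ⟨0, h⟩).2
      · exact hxlt
    constructor
    · intro j
      refine Fin.cases
        (motive := fun j => 0 < (Fin.cons x y : Fin (n+1) → ℝ) j ∧ (Fin.cons x y : Fin (n+1) → ℝ) j < t) ?_ (fun i => ?_) j
      · simpa using ⟨hx0, hxt⟩
      · simpa using hbd i
    · have key : ∀ b a : Fin (n + 1), a < b → (Fin.cons x y : Fin (n+1) → ℝ) a < (Fin.cons x y : Fin (n+1) → ℝ) b := by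
        intro b
        refine Fin.cases
          (motive := fun b => ∀ a : Fin (n + 1), a < b → (Fin.cons x y : Fin (n+1) → ℝ) a < (Fin.cons x y : Fin (n+1) → ℝ) b)
          ?_ ?_ b
        · intro a hab
          exact absurd hab (Fin.not_lt_zero a)
        · intro j a
          refine Fin.cases
            (motive := fun a => a < Fin.succ j → (Fin.cons x y : Fin (n+1) → ℝ) a < (Fin.cons x y : Fin (n+1) → ℝ) (Fin.succ j))
            ?_ ?_ a
          · intro _
            simp only [Fin.cons_zero, Fin.cons_succ]
            have hn : 0 < n := j.pos
            rw [dif_pos hn] at hxlt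
            calc x < y ⟨0, hn⟩ := hxlt
              _ ≤ y j := hmono.monotone (by simp [Fin.le_def])
          · intro i hab
            simp only [Fin.cons_succ]
            exact hmono (Fin.succ_lt_succ_iff.mp hab)
      exact fun a b hab => key b a hab

lemma simplexIntegrand_cons (n : ℕ) (β : Fin (n + 1) → ℝ) (t x : ℝ) (y : Fin n → ℝ) :
    (∏ j : Fin (n + 1),
        ((if h : (j : ℕ) + 1 < n + 1 then (Fin.cons x y : Fin (n+1) → ℝ) ⟨(j : ℕ) + 1, h⟩ else t)
          - (Fin.cons x y : Fin (n+1) → ℝ) j) ^ (β j))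
      = ((if h : 0 < n then y ⟨0, h⟩ else t) - x) ^ (β 0) *
        ∏ i : Fin n,
          ((if h : (i : ℕ) + 1 < n then y ⟨(i : ℕ) + 1, h⟩ else t) - y i) ^ (β i.succ) := by
  rw [Fin.prod_univ_succ]
  congr 1
  · congr 1
    congr 1
    rcases Nat.eq_zero_or_pos n with h | h
    · subst h
      norm_num
    · have h01 : ((0 : Fin (n+1)) : ℕ) + 1 < n + 1 := by
        simp only [Fin.val_zero]
        omega
      rw [dif_pos h01, dif_pos h]
      have : (⟨((0 : Fin (n+1)) : ℕ) + 1, h01⟩ : Fin (n + 1)) = Fin.succ ⟨0, h⟩ := by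
        simp [Fin.ext_iff]
      rw [this, Fin.cons_succ]
  · apply Finset.prod_congr rfl
    intro i _
    congr 1
    have hv : ((Fin.succ i : Fin (n+1)) : ℕ) = (i : ℕ) + 1 := rfl
    rw [Fin.cons_succ]
    congr 1
    by_cases h : (i : ℕ) + 1 < n
    · rw [dif_pos (by omega : ((Fin.succ i : Fin (n+1)) : ℕ) + 1 < n + 1), dif_pos h]
      have : (⟨((Fin.succ i : Fin (n+1)) : ℕ) + 1, by omega⟩ : Fin (n + 1))
          = Fin.succ ⟨(i : ℕ) + 1, h⟩ := by
        simp [Fin.ext_iff]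
      rw [this, Fin.cons_succ]
    · rw [dif_neg (by omega : ¬ ((Fin.succ i : Fin (n+1)) : ℕ) + 1 < n + 1), dif_neg h]

end helpers

lemma simplex_lintegral_aux (n : ℕ) :
    ∀ (α : ℝ), -1 < α → ∀ (β : Fin n → ℝ), (∀ j, -1 < β j) → ∀ (t : ℝ), 0 < t →
    (∫⁻ s in simplexSet n t, ENNReal.ofReal
        ((if h : 0 < n then s ⟨0, h⟩ else t) ^ α *
          ∏ j : Fin n,
            ((if h : (j : ℕ) + 1 < n then s ⟨(j : ℕ) + 1, h⟩ else t) - s j) ^ (β j)))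
      = ENNReal.ofReal
          ((Real.Gamma (α + 1) * ∏ j : Fin n, Real.Gamma (β j + 1))
            / Real.Gamma (α + (∑ j : Fin n, β j) + n + 1)
            * t ^ (α + (∑ j : Fin n, β j) + n)) := by
  induction n with
  | zero =>
    intro α hα β hβ t ht
    have hset : simplexSet 0 t = Set.univ := by
      ext s
      simp only [simplexSet, Set.mem_setOf_eq, Set.mem_univ, iff_true]
      exact ⟨fun j => j.elim0, fun a b _ => a.elim0⟩
    have hvol : (volume : Measure (Fin 0 → ℝ)) Set.univ = 1 := by
      rw [MeasureTheory.volume_pi, MeasureTheory.Measure.pi_univ]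
      simp
    have hd : ∀ s : Fin 0 → ℝ, (if h : 0 < 0 then s ⟨0, h⟩ else t) = t :=
      fun s => dif_neg (lt_irrefl 0)
    rw [hset, Measure.restrict_univ]
    simp only [hd, Finset.univ_eq_empty, Finset.prod_empty, Finset.sum_empty, mul_one]
    rw [lintegral_const, hvol, mul_one]
    have hG : Real.Gamma (α + 1) ≠ 0 := (Real.Gamma_pos_of_pos (by linarith)).ne'
    norm_num [div_self hG]
  | succ n IH =>
    intro α hα β hβ t ht
    have hS1 := measurableSet_simplexSet (n + 1) t
    have hS0 := measurableSet_simplexSet n t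
    set F : (Fin (n + 1) → ℝ) → ℝ≥0∞ := (fun s => ENNReal.ofReal
        ((if h : 0 < n + 1 then s ⟨0, h⟩ else t) ^ α *
          ∏ j : Fin (n + 1),
            ((if h : (j : ℕ) + 1 < n + 1 then s ⟨(j : ℕ) + 1, h⟩ else t) - s j) ^ (β j)))
      with hF
    have hFmeas : Measurable F := (measurable_simplexIntegrand (n + 1) α β t).ennreal_ofReal
    set e := MeasurableEquiv.piFinSuccAbove (fun _ : Fin (n + 1) => ℝ) 0 with he
    have hMP := (MeasureTheory.volume_preserving_piFinSuccAbove (fun _ : Fin (n + 1) => ℝ) 0).symm e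
    rw [← lintegral_indicator hS1,
      ← hMP.lintegral_comp_emb (MeasurableEquiv.measurableEmbedding _)
        ((simplexSet (n + 1) t).indicator F),
      show (volume : Measure (ℝ × (Fin n → ℝ))) = (volume : Measure ℝ).prod volume from rfl,
      lintegral_prod_symm'
        (fun z : ℝ × (Fin n → ℝ) => (simplexSet (n+1) t).indicator F (e.symm z))
        (by exact (hFmeas.indicator hS1).comp (MeasurableEquiv.measurable e.symm))]
    have hsymm : ∀ (x : ℝ) (y : Fin n → ℝ), e.symm (x, y) = Fin.cons x y := by
      intro x y
      simp only [he, MeasurableEquiv.piFinSuccAbove_symm_apply, Fin.insertNthEquiv_zero]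
      rfl
    set c : (Fin n → ℝ) → ℝ := (fun y => if h : 0 < n then y ⟨0, h⟩ else t) with hc
    set P : (Fin n → ℝ) → ℝ := (fun y =>
      ∏ i : Fin n, ((if h : (i : ℕ) + 1 < n then y ⟨(i : ℕ) + 1, h⟩ else t) - y i) ^ (β i.succ))
      with hP
    have hc' : ∀ y : Fin n → ℝ, (if h : 0 < n then y ⟨0, h⟩ else t) = c y := fun y => rfl
    have hP' : ∀ y : Fin n → ℝ,
        (∏ i : Fin n, ((if h : (i : ℕ) + 1 < n then y ⟨(i : ℕ) + 1, h⟩ else t) - y i) ^ (β i.succ))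
          = P y := fun y => rfl
    have hB : (0:ℝ) ≤ Real.Gamma (α + 1) * Real.Gamma (β 0 + 1) / Real.Gamma (α + β 0 + 2) := by
      have h1 := Real.Gamma_pos_of_pos (show (0:ℝ) < α + 1 by linarith)
      have h2 := Real.Gamma_pos_of_pos (show (0:ℝ) < β 0 + 1 by linarith [hβ 0])
      have h3 := Real.Gamma_pos_of_pos (show (0:ℝ) < α + β 0 + 2 by linarith [hβ 0])
      positivity
    have hinner : ∀ y : Fin n → ℝ,
        (∫⁻ x, ((simplexSet (n + 1) t).indicator F) (e.symm (x, y)))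
          = (simplexSet n t).indicator (fun y =>
              ENNReal.ofReal (Real.Gamma (α + 1) * Real.Gamma (β 0 + 1)
                / Real.Gamma (α + β 0 + 2))
              * ENNReal.ofReal ((c y) ^ (α + β 0 + 1) * P y)) y := by
      intro y
      by_cases hy : y ∈ simplexSet n t
      · rw [Set.indicator_of_mem hy]
        have hc0 : 0 < c y := by
          rw [← hc' y]
          split_ifs with h
          · exact (hy.1 ⟨0, h⟩).1
          · exact ht
        have heq : ∀ x : ℝ, ((simplexSet (n + 1) t).indicator F) (e.symm (x, y))
            = (Set.Ioo (0:ℝ) (c y)).indicator (fun x => F (Fin.cons x y)) x := by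
          intro x
          rw [hsymm]
          by_cases hmem : x ∈ Set.Ioo 0 (c y)
          · rw [Set.indicator_of_mem hmem,
              Set.indicator_of_mem ((mem_simplexSet_cons ht x y).mpr ⟨hy, hmem⟩)]
          · rw [Set.indicator_of_notMem hmem,
              Set.indicator_of_notMem
                (fun hm => hmem ((mem_simplexSet_cons ht x y).mp hm).2)]
        simp_rw [heq]
        rw [lintegral_indicator measurableSet_Ioo]
        have hP0 : 0 ≤ P y := by
          rw [← hP' y]
          exact Finset.prod_nonneg fun i _ =>
            Real.rpow_nonneg (simplexSet_factor_pos ht hy i).le _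
        have hFx : ∀ x ∈ Set.Ioo (0:ℝ) (c y), F (Fin.cons x y)
            = ENNReal.ofReal (x ^ α * (c y - x) ^ (β 0)) * ENNReal.ofReal (P y) := by
          intro x hx
          simp only [hF]
          rw [dif_pos (Nat.succ_pos n)]
          rw [show (⟨0, Nat.succ_pos n⟩ : Fin (n+1)) = 0 from rfl, Fin.cons_zero,
            simplexIntegrand_cons n β t x y, hc' y, hP' y, ← mul_assoc,
            ENNReal.ofReal_mul
              (mul_nonneg (Real.rpow_nonneg hx.1.le _)
                (Real.rpow_nonneg (by linarith [hx.2]) _))]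
        rw [setLIntegral_congr_fun measurableSet_Ioo hFx,
          lintegral_mul_const' _ _ ENNReal.ofReal_ne_top,
          beta_lintegral hα (hβ 0) hc0,
          ENNReal.ofReal_mul hB, mul_assoc,
          ← ENNReal.ofReal_mul (Real.rpow_nonneg hc0.le _)]
      · rw [Set.indicator_of_notMem hy]
        have hzero : ∀ x : ℝ, ((simplexSet (n + 1) t).indicator F) (e.symm (x, y)) = 0 := by
          intro x
          rw [hsymm]
          exact Set.indicator_of_notMem
            (fun hmem => hy ((mem_simplexSet_cons ht x y).mp hmem).1) _
        simp [hzero]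
    rw [lintegral_congr hinner, lintegral_indicator hS0,
      lintegral_const_mul' _ _ ENNReal.ofReal_ne_top]
    have hIH := IH (α + β 0 + 1) (by linarith [hβ 0]) (fun i => β i.succ)
      (fun i => hβ i.succ) t ht
    have hIH' : (∫⁻ y in simplexSet n t, ENNReal.ofReal ((c y) ^ (α + β 0 + 1) * P y))
        = ENNReal.ofReal
          ((Real.Gamma (α + β 0 + 1 + 1) * ∏ i : Fin n, Real.Gamma (β i.succ + 1))
            / Real.Gamma (α + β 0 + 1 + (∑ i : Fin n, β i.succ) + n + 1)
            * t ^ (α + β 0 + 1 + (∑ i : Fin n, β i.succ) + n)) := by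
      simp only [hc, hP]
      exact hIH
    rw [hIH', ← ENNReal.ofReal_mul hB]
    congr 1
    have hGab : Real.Gamma (α + β 0 + 2) ≠ 0 :=
      (Real.Gamma_pos_of_pos (by linarith [hβ 0])).ne'
    have hsum := sum_add_card_nonneg hβ
    have hGD : Real.Gamma (α + (∑ j : Fin (n+1), β j) + ((n:ℝ)+1) + 1) ≠ 0 := by
      apply (Real.Gamma_pos_of_pos _).ne'
      push_cast at hsum
      linarith
    rw [Fin.prod_univ_succ (fun j => Real.Gamma (β j + 1)), Fin.sum_univ_succ β]
    rw [show α + β 0 + 1 + 1 = α + β 0 + 2 by ring,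
      show α + β 0 + 1 + (∑ i : Fin n, β i.succ) + (n:ℝ) + 1
          = α + (β 0 + ∑ i : Fin n, β i.succ) + ((n:ℝ)+1) + 1 by push_cast; ring,
      show α + β 0 + 1 + (∑ i : Fin n, β i.succ) + (n:ℝ)
          = α + (β 0 + ∑ i : Fin n, β i.succ) + ((n:ℝ)+1) by push_cast; ring,
      show ((n+1 : ℕ) : ℝ) = (n:ℝ) + 1 by push_cast; ring]
    rw [Fin.sum_univ_succ β] at hGD
    field_simp

/-- Simplex integral formula (Lemma 3.5):
`∫_{Tₙ(t)} ∏ⱼ (t_{j+1} - t_j)^{βⱼ} dt = (∏ⱼ Γ(βⱼ+1)) / Γ(∑ βⱼ + n + 1) · t^{∑ βⱼ + n}`,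
with the convention `t_{n+1} = t`. -/
theorem simplex_integral_formula (n : ℕ) (β : Fin n → ℝ) (hβ : ∀ j, -1 < β j)
    (t : ℝ) (ht : 0 < t) :
    (∫ s in {s : Fin n → ℝ | (∀ j, 0 < s j ∧ s j < t) ∧ StrictMono s},
        ∏ j : Fin n,
          ((if h : (j : ℕ) + 1 < n then s ⟨(j : ℕ) + 1, h⟩ else t) - s j) ^ (β j))
      = (∏ j : Fin n, Real.Gamma (β j + 1)) / Real.Gamma ((∑ j : Fin n, β j) + n + 1)
        * t ^ ((∑ j : Fin n, β j) + n) := by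
  have hset : {s : Fin n → ℝ | (∀ j, 0 < s j ∧ s j < t) ∧ StrictMono s} = simplexSet n t := rfl
  rw [hset]
  have hmeas : Measurable (fun s : Fin n → ℝ =>
      ∏ j : Fin n, ((if h : (j : ℕ) + 1 < n then s ⟨(j : ℕ) + 1, h⟩ else t) - s j) ^ (β j)) :=
    Finset.measurable_prod _ fun j _ => by split_ifs <;> fun_prop
  have hnn : 0 ≤ᵐ[volume.restrict (simplexSet n t)] fun s : Fin n → ℝ =>
      ∏ j : Fin n, ((if h : (j : ℕ) + 1 < n then s ⟨(j : ℕ) + 1, h⟩ else t) - s j) ^ (β j) := by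
    filter_upwards [ae_restrict_mem (measurableSet_simplexSet n t)] with s hs
    exact Finset.prod_nonneg fun j _ => Real.rpow_nonneg (simplexSet_factor_pos ht hs j).le _
  rw [MeasureTheory.integral_eq_lintegral_of_nonneg_ae hnn hmeas.aestronglyMeasurable]
  have haux := simplex_lintegral_aux n 0 (by norm_num) β hβ t ht
  have h1 : (∫⁻ s in simplexSet n t, ENNReal.ofReal
        (∏ j : Fin n, ((if h : (j : ℕ) + 1 < n then s ⟨(j : ℕ) + 1, h⟩ else t) - s j) ^ (β j)))
      = ENNReal.ofReal
          ((Real.Gamma (0 + 1) * ∏ j : Fin n, Real.Gamma (β j + 1))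
            / Real.Gamma (0 + (∑ j : Fin n, β j) + n + 1)
            * t ^ (0 + (∑ j : Fin n, β j) + n)) := by
    rw [← haux]
    refine lintegral_congr fun s => ?_
    rw [Real.rpow_zero, one_mul]
  rw [h1]
  have hsum := sum_add_card_nonneg hβ
  have h2 : (0:ℝ) < Real.Gamma (0 + (∑ j : Fin n, β j) + n + 1) :=
    Real.Gamma_pos_of_pos (by linarith)
  have h3 : (0:ℝ) < ∏ j : Fin n, Real.Gamma (β j + 1) :=
    Finset.prod_pos fun j _ => Real.Gamma_pos_of_pos (by linarith [hβ j])
  have h4 : (0:ℝ) < t ^ (0 + (∑ j : Fin n, β j) + n) := Real.rpow_pos_of_pos ht _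
  rw [ENNReal.toReal_ofReal (by positivity)]
  norm_num [Real.Gamma_one]
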